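/- Let (R,m) be an F-finite reduced Noetherian local ring of prime characteristic p. Suppose T is an ideal of R such that T ∩ R^o ≠ ∅, φ(T) ⊆ T for every e ≥ 1 and every additive map φ : R → R satisfying φ(r^{p^e}·x) = r·φ(x), and T ⊆ J for every ideal J with J ∩ R^o ≠ ∅ that is stable under all such maps φ (so T is the test ideal of the full Cartier algebra of R, which equals the big test ideal τ_b(R) by a result of Hara–Takagi). Then T is a strong test ideal: T·(I*) = T·I for every ideal I of R. -/

import Mathlib

/-- The `q`-th Frobenius power `I^{[q]}` of an ideal `I`: the ideal generated by
the `q`-th powers of the elements of `I`. -/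
def frobeniusPower {R : Type*} [CommRing R] (I : Ideal R) (q : ℕ) : Ideal R :=
  Ideal.span ((fun a => a ^ q) '' (I : Set R))

/-- `Rreg c` means `c ∈ R^o`, i.e. `c` avoids every minimal prime of `R`. -/
def Rreg {R : Type*} [CommRing R] (c : R) : Prop :=
  ∀ P ∈ minimalPrimes R, c ∉ P

/-- `x` lies in the tight closure `I*` of `I` (characteristic `p`):
there is `c ∈ R^o` with `c * x^(p^e) ∈ I^{[p^e]}` for all `e ≫ 0`. -/
def InTightClosure {R : Type*} [CommRing R] (p : ℕ) (I : Ideal R) (x : R) : Prop :=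
  ∃ c, Rreg c ∧ ∃ N : ℕ, ∀ e ≥ N, c * x ^ p ^ e ∈ frobeniusPower I (p ^ e)

/-- The tight closure `I*` of `I`, as an ideal: the span of the set of elements in the
tight closure (this set is already an ideal, so taking the span is harmless). -/
def tightClosure {R : Type*} [CommRing R] (p : ℕ) (I : Ideal R) : Ideal R :=
  Ideal.span {x | InTightClosure p I x}

section Basic
variable {R : Type*} [CommRing R]

lemma frobeniusPower_one (I : Ideal R) : frobeniusPower I 1 = I := by
  unfold frobeniusPower
  simp only [pow_one, Set.image_id']
  exact Ideal.span_eq I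

lemma pow_mem_frobeniusPower {I : Ideal R} {a : R} (ha : a ∈ I) (q : ℕ) :
    a ^ q ∈ frobeniusPower I q :=
  Ideal.subset_span ⟨a, ha, rfl⟩

lemma frobeniusPower_mul_le (I : Ideal R) (q q' : ℕ) :
    frobeniusPower I (q * q') ≤ frobeniusPower (frobeniusPower I q) q' := by
  refine Ideal.span_le.mpr ?_
  rintro _ ⟨a, ha, rfl⟩
  simp only
  rw [pow_mul]
  exact pow_mem_frobeniusPower (pow_mem_frobeniusPower ha q) q'

lemma map_mul_frobeniusPower {T J : Ideal R} {q : ℕ} (φ : R →+ R)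
    (hφ : ∀ r x : R, φ (r ^ q * x) = r * φ x)
    (hT : ∀ t ∈ T, φ t ∈ T) {z : R} (hz : z ∈ T * frobeniusPower J q) :
    φ z ∈ T * J := by
  have aux : ∀ y ∈ frobeniusPower J q, ∀ t ∈ T, φ (t * y) ∈ T * J := by
    intro y hy
    induction hy using Submodule.span_induction with
    | mem y hy =>
      obtain ⟨b, hb, rfl⟩ := hy
      intro t ht
      show φ (t * b ^ q) ∈ T * J
      have heq : φ (t * b ^ q) = φ t * b := by
        rw [mul_comm t (b ^ q), hφ b t, mul_comm]
      rw [heq]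
      exact Ideal.mul_mem_mul (hT t ht) hb
    | zero => intro t _; simp
    | add y z _ _ hy hz =>
      intro t ht
      rw [mul_add, map_add]
      exact add_mem (hy t ht) (hz t ht)
    | smul r y _ hy =>
      intro t ht
      rw [smul_eq_mul, show t * (r * y) = (t * r) * y by ring]
      exact hy (t * r) (Ideal.mul_mem_right r T ht)
  refine Submodule.mul_induction_on hz (fun t ht y hy => aux y hy t ht) ?_
  intro a b ha hb
  rw [map_add]; exact add_mem ha hb

lemma Rreg.one : Rreg (1 : R) := fun P hP h1 => hP.1.1.ne_top (Ideal.eq_top_iff_one P |>.mpr h1)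

lemma Rreg.mul {a b : R} (ha : Rreg a) (hb : Rreg b) : Rreg (a * b) := by
  intro P hP hab
  haveI := hP.1.1
  rcases Ideal.IsPrime.mem_or_mem hP.1.1 hab with h | h
  · exact ha P hP h
  · exact hb P hP h

end Basic
def Frob (R : Type*) (p : ℕ) : Type _ := R

namespace Frob
variable {R : Type*} [CommRing R] {p : ℕ} [Fact p.Prime] [CharP R p]

instance : AddCommGroup (Frob R p) := inferInstanceAs (AddCommGroup R)

/-- Identity inclusion. -/
def of (x : R) : Frob R p := x
def un (x : Frob R p) : R := x

instance : Module R (Frob R p) :=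
  Module.compHom (R := R) (S := R) (M := R) (frobenius R p)

lemma smul_def (r : R) (x : Frob R p) : r • x = of (r ^ p * un x) := by
  show of (frobenius R p r * un x) = of (r ^ p * un x)
  rw [frobenius_def]

lemma of_add (x y : R) : (of (x + y) : Frob R p) = of x + of y := rfl
lemma un_of (x : R) : un (of x : Frob R p) = x := rfl

lemma module_finite (hFF : (frobenius R p).Finite) : Module.Finite R (Frob R p) := by
  letI alg : Algebra R R := (frobenius R p).toAlgebra
  haveI hfin : @Module.Finite R R _ _ alg.toModule := hFF
  letI : Module R R := alg.toModule
  obtain ⟨s, hs⟩ := hfin.fg_top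
  constructor
  rw [Submodule.fg_def]
  refine ⟨of '' (s : Set R), (s : Set R).toFinite.image _, ?_⟩
  have aux : ∀ z : R, z ∈ Submodule.span R (s : Set R) →
      (of z : Frob R p) ∈ Submodule.span R (of '' (s : Set R)) := by
    intro z hz
    induction hz using Submodule.span_induction with
    | mem y hy => exact Submodule.subset_span ⟨y, hy, rfl⟩
    | zero => exact zero_mem _
    | add y w _ _ hy hw => exact add_mem hy hw
    | smul r y _ hy =>
      have h1 : (frobenius R p) r * y = r ^ p * y := by
        rw [frobenius_def]
      have h2 : (of (r ^ p * y) : Frob R p) = r • of y := (smul_def r (of y)).symm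
      show (of ((frobenius R p) r * y) : Frob R p) ∈ _
      rw [h1, h2]
      exact Submodule.smul_mem _ r hy
  rw [eq_top_iff]
  rintro x -
  have : (un x : R) ∈ Submodule.span R (s : Set R) := by rw [hs]; trivial
  exact aux x this

end Frob

section Hard
variable {R : Type*} [CommRing R] [IsNoetherianRing R] [IsReduced R]
  {p : ℕ} [Fact p.Prime] [CharP R p]

set_option maxHeartbeats 1000000 in
lemma algebraMap_eq_zero_of_mem_minimalPrime {P : Ideal R} [P.IsPrime]
    (hP : P ∈ minimalPrimes R)
    {r : R} (hr : r ∈ P) : algebraMap R (Localization.AtPrime P) r = 0 := by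
  have hnil : algebraMap R (Localization.AtPrime P) r ∈
      nilradical (Localization.AtPrime P) := by
    rw [nilradical_eq_sInf, Ideal.mem_sInf]
    intro J hJ
    haveI : J.IsPrime := hJ
    have hdisj := (IsLocalization.isPrime_iff_isPrime_disjoint P.primeCompl
      (Localization.AtPrime P) J).mp hJ
    set Q := J.comap (algebraMap R (Localization.AtPrime P)) with hQdef
    have hQP : Q ≤ P := by
      intro a haQ
      by_contra haP
      exact Set.disjoint_left.mp hdisj.2 haP haQ
    obtain ⟨Q', hQ', hQ'le⟩ := Ideal.exists_minimalPrimes_le (I := (⊥ : Ideal R))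
      (J := Q) bot_le
    have hPQ' : P ≤ Q' := hP.2 hQ'.1 (hQ'le.trans hQP)
    exact Ideal.mem_comap.mp (hQ'le (hPQ' hr))
  rwa [nilradical_eq_zero, Ideal.zero_eq_bot, Ideal.mem_bot] at hnil

set_option maxHeartbeats 1000000 in
lemma isField_of_minimalPrime {P : Ideal R} [P.IsPrime] (hP : P ∈ minimalPrimes R) :
    IsField (Localization.AtPrime P) := by
  refine ⟨exists_pair_ne _, mul_comm, ?_⟩
  intro a ha
  obtain ⟨⟨r, s⟩, hrs⟩ := IsLocalization.mk'_surjective P.primeCompl a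
  obtain rfl : IsLocalization.mk' (Localization.AtPrime P) r s = a := hrs
  by_cases hr : r ∈ P
  · exfalso
    apply ha
    rw [IsLocalization.mk'_eq_mul_mk'_one, algebraMap_eq_zero_of_mem_minimalPrime hP hr,
      zero_mul]
  · have hu : IsUnit (IsLocalization.mk' (Localization.AtPrime P) r s) :=
      (IsLocalization.AtPrime.isUnit_mk'_iff (Localization.AtPrime P) P r s).mpr hr
    exact hu.exists_right_inv

set_option maxHeartbeats 1000000 in
lemma exists_pinv_map (hFF : (frobenius R p).Finite) {P : Ideal R} (hP : P ∈ minimalPrimes R)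
    {d : R} (hd : d ∉ P) :
    ∃ φ : R →+ R, (∀ r x : R, φ (r ^ p * x) = r * φ x) ∧ φ d ∉ P := by
  haveI := hP.1.1
  haveI : Module.Finite R (Frob R p) := Frob.module_finite hFF
  haveI : Module.FinitePresentation R (Frob R p) :=
    Module.finitePresentation_of_finite R (Frob R p)
  have hv : (LocalizedModule.mk (Frob.of d) 1 :
      LocalizedModule P.primeCompl (Frob R p)) ≠ 0 := by
    intro h
    rw [show (0 : LocalizedModule P.primeCompl (Frob R p)) = LocalizedModule.mk 0 1 from
      (LocalizedModule.zero_mk 1).symm, LocalizedModule.mk_eq] at h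
    obtain ⟨u, hu⟩ := h
    simp only [one_smul, smul_zero] at hu
    have hu2 : (u : R) • (Frob.of d : Frob R p) = 0 := hu
    rw [Frob.smul_def, Frob.un_of] at hu2
    have hmem : (u : R) ^ p * d ∈ P := by
      have h0 : (u : R) ^ p * d = Frob.un (Frob.of ((u : R) ^ p * d) : Frob R p) := rfl
      rw [h0, hu2]
      exact zero_mem P
    rcases ‹P.IsPrime›.mem_or_mem hmem with h' | h'
    · exact u.2 (‹P.IsPrime›.mem_of_pow_mem p h')
    · exact hd h'
  letI F : Field (Localization.AtPrime P) := (isField_of_minimalPrime hP).toField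
  haveI : NoZeroSMulDivisors (Localization.AtPrime P)
      (LocalizedModule P.primeCompl (Frob R p)) := by
    constructor
    intro c x hcx
    by_cases hc : c = 0
    · exact Or.inl hc
    · refine Or.inr ?_
      have := congrArg (fun y => c⁻¹ • y) hcx
      simpa [smul_smul, inv_mul_cancel₀ hc] using this
  have hker : LinearMap.ker (LinearMap.toSpanSingleton (Localization.AtPrime P)
      (LocalizedModule P.primeCompl (Frob R p)) (LocalizedModule.mk (Frob.of d) 1)) = ⊥ :=
    LinearMap.ker_toSpanSingleton _ hv
  obtain ⟨lam, hlam⟩ :=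
    (LinearMap.toSpanSingleton (Localization.AtPrime P)
      (LocalizedModule P.primeCompl (Frob R p))
      (LocalizedModule.mk (Frob.of d) 1)).exists_leftInverse_of_injective hker
  have hlamv : lam (LocalizedModule.mk (Frob.of d) 1) = 1 := by
    have h1 := LinearMap.congr_fun hlam (1 : Localization.AtPrime P)
    simpa [LinearMap.toSpanSingleton_apply] using h1
  obtain ⟨h, s, hcomp⟩ :=
    Module.FinitePresentation.exists_lift_of_isLocalizedModule P.primeCompl
      (Algebra.linearMap R (Localization.AtPrime P))
      ((lam.restrictScalars R) ∘ₗ LocalizedModule.mkLinearMap P.primeCompl (Frob R p))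
  have heval := LinearMap.congr_fun hcomp (Frob.of d)
  have heval2 : algebraMap R (Localization.AtPrime P) (h (Frob.of d)) =
      algebraMap R (Localization.AtPrime P) s := by
    have h2 : algebraMap R (Localization.AtPrime P) (h (Frob.of d)) =
        (s : R) • lam (LocalizedModule.mk (Frob.of d) 1) := by
      simpa [LocalizedModule.mkLinearMap_apply, Submonoid.smul_def] using heval
    rw [hlamv, Algebra.smul_def, mul_one] at h2
    exact h2
  obtain ⟨u, hu⟩ := (IsLocalization.eq_iff_exists P.primeCompl
    (Localization.AtPrime P)).mp heval2
  have hnot : h (Frob.of d) ∉ P := by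
    intro hmem
    have hP2 : (u : R) * (s : R) ∈ P := hu ▸ Ideal.mul_mem_left P u hmem
    rcases ‹P.IsPrime›.mem_or_mem hP2 with h' | h'
    · exact u.2 h'
    · exact s.2 h'
  refine ⟨{ toFun := fun x => h (Frob.of x),
            map_zero' := by
              show h (Frob.of 0) = 0
              rw [show (Frob.of (0 : R) : Frob R p) = 0 from rfl, map_zero],
            map_add' := fun a b => by
              show h (Frob.of (a + b)) = h (Frob.of a) + h (Frob.of b)
              rw [Frob.of_add, map_add] }, ?_, hnot⟩
  intro r x
  show h (Frob.of (r ^ p * x)) = r * h (Frob.of x)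
  have hsm : (Frob.of (r ^ p * x) : Frob R p) = r • Frob.of x := by
    rw [Frob.smul_def, Frob.un_of]
  rw [hsm, map_smul, smul_eq_mul]

end Hard

set_option maxHeartbeats 1000000 in
/-- The test ideal of the full Cartier algebra (the big test ideal
`τ_b(R)`), i.e. the smallest ideal meeting `R^o` stable under all `p^{-e}`-linear maps,
is a strong test ideal. -/
theorem big_test_ideal_is_strong_test_ideal {R : Type*} [CommRing R] [IsNoetherianRing R]
    [IsLocalRing R] [IsReduced R] (p : ℕ) [Fact p.Prime] [CharP R p]
    (hFF : (frobenius R p).Finite)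
    (T : Ideal R)
    (hTreg : ∃ c ∈ T, Rreg c)
    (hTcomp : ∀ e : ℕ, 1 ≤ e → ∀ φ : R →+ R,
      (∀ r x : R, φ (r ^ p ^ e * x) = r * φ x) → ∀ x ∈ T, φ x ∈ T)
    (hTmin : ∀ J : Ideal R, (∃ c ∈ J, Rreg c) →
      (∀ e : ℕ, 1 ≤ e → ∀ φ : R →+ R,
        (∀ r x : R, φ (r ^ p ^ e * x) = r * φ x) → ∀ x ∈ J, φ x ∈ J) → T ≤ J) :
    ∀ I : Ideal R, T * tightClosure p I = T * I := by
  intro I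
  obtain ⟨d, hdT, hdreg⟩ := hTreg
  -- Step A : T ≤ K where K is spanned by images of T under p^{-e}-linear maps
  set Kset : Set R := {y | ∃ e : ℕ, 1 ≤ e ∧ ∃ φ : R →+ R,
    (∀ r z : R, φ (r ^ p ^ e * z) = r * φ z) ∧ ∃ t ∈ T, φ t = y} with hKsetdef
  set K : Ideal R := Ideal.span Kset with hKdef
  have hKT : K ≤ T := by
    rw [hKdef, Ideal.span_le]
    rintro y ⟨e, he, φ, hφ, t, ht, rfl⟩
    exact hTcomp e he φ hφ t ht
  have hKstab : ∀ y ∈ K, ∀ e : ℕ, 1 ≤ e → ∀ ψ : R →+ R,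
      (∀ r z : R, ψ (r ^ p ^ e * z) = r * ψ z) → ψ y ∈ K := by
    intro y hy
    induction hy using Submodule.span_induction with
    | mem y hymem =>
      intro e he ψ hψ
      obtain ⟨e', he', φ, hφ, t, ht, rfl⟩ := hymem
      exact Ideal.subset_span ⟨e, he, ψ, hψ, φ t, hTcomp e' he' φ hφ t ht, rfl⟩
    | zero => intro e he ψ hψ; rw [map_zero]; exact zero_mem K
    | add y z _ _ hy hz =>
      intro e he ψ hψ
      rw [map_add]; exact add_mem (hy e he ψ hψ) (hz e he ψ hψ)
    | smul r y _ hy =>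
      intro e he ψ hψ
      have hχ : ∀ a z : R, (ψ.comp (AddMonoidHom.mulLeft r)) (a ^ p ^ e * z)
          = a * (ψ.comp (AddMonoidHom.mulLeft r)) z := by
        intro a z
        show ψ (r * (a ^ p ^ e * z)) = a * ψ (r * z)
        rw [show r * (a ^ p ^ e * z) = a ^ p ^ e * (r * z) by ring, hψ]
      have := hy e he (ψ.comp (AddMonoidHom.mulLeft r)) hχ
      simpa using this
  have hKreg : ∃ c ∈ K, Rreg c := by
    have hfin : (minimalPrimes R).Finite := minimalPrimes.finite_of_isNoetherianRing R
    have hnotle : ∀ P ∈ minimalPrimes R, ¬ K ≤ P := by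
      intro P hP hle
      obtain ⟨φ, hφ, hφd⟩ := exists_pinv_map hFF hP (hdreg P hP)
      apply hφd
      apply hle
      refine Ideal.subset_span ⟨1, le_refl 1, φ, ?_, d, hdT, rfl⟩
      intro r z; rw [pow_one]; exact hφ r z
    by_contra hcon
    push_neg at hcon
    have hsub : (K : Set R) ⊆ ⋃ P ∈ (hfin.toFinset : Set (Ideal R)), (P : Set R) := by
      intro c hc
      have := hcon c hc
      simp only [Rreg, not_forall, not_not] at this
      obtain ⟨P, hP, hcP⟩ := this
      exact Set.mem_biUnion (by simpa using hP) hcP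
    rw [Ideal.subset_union_prime ⊥ ⊥ (fun P hP _ _ => by
      have : P ∈ minimalPrimes R := by simpa using hP
      exact this.1.1)] at hsub
    obtain ⟨P, hPs, hle⟩ := hsub
    exact hnotle P (by simpa using hPs) hle
  have hTK : T ≤ K := hTmin K hKreg (fun e he ψ hψ y hy => hKstab y hy e he ψ hψ)
  -- the main core statement
  have core : ∀ x : R, InTightClosure p I x → ∀ t ∈ T, t * x ∈ T * I := by
    intro x hx
    obtain ⟨c₀, hc₀reg, N, hc₀⟩ := hx
    -- a commutation identity
    have hswap : ∀ (e₁ e₂ : ℕ) (φ : R →+ R), (∀ r z : R, φ (r ^ p ^ e₁ * z) = r * φ z) →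
        ∀ a : R, φ (a * x ^ p ^ (e₂ + e₁)) = φ a * x ^ p ^ e₂ := by
      intro e₁ e₂ φ hφ a
      have h1 := hφ (x ^ p ^ e₂) a
      calc φ (a * x ^ p ^ (e₂ + e₁)) = φ ((x ^ p ^ e₂) ^ p ^ e₁ * a) := by
            rw [← pow_mul, ← pow_add, mul_comm]
        _ = x ^ p ^ e₂ * φ a := h1
        _ = φ a * x ^ p ^ e₂ := mul_comm _ _
    -- one descent step
    have hstep : ∀ (e e₁ : ℕ), 1 ≤ e₁ → ∀ φ : R →+ R,
        (∀ r z : R, φ (r ^ p ^ e₁ * z) = r * φ z) → ∀ u : R,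
        u * x ^ p ^ (e + e₁) ∈ T * frobeniusPower I (p ^ (e + e₁)) →
        φ u * x ^ p ^ e ∈ T * frobeniusPower I (p ^ e) := by
      intro e e₁ he₁ φ hφ u hu
      rw [← hswap e₁ e φ hφ u]
      refine map_mul_frobeniusPower (q := p ^ e₁) φ hφ
        (fun t ht => hTcomp e₁ he₁ φ hφ t ht) ?_
      have hle : frobeniusPower I (p ^ (e + e₁)) ≤
          frobeniusPower (frobeniusPower I (p ^ e)) (p ^ e₁) := by
        rw [pow_add]; exact frobeniusPower_mul_le I _ _
      exact Ideal.mul_mono_right hle hu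
    -- Step B : for all t in T eventually
    have hJ1 : ∃ M : ℕ, ∀ t ∈ T, ∀ e, M ≤ e →
        t * x ^ p ^ e ∈ T * frobeniusPower I (p ^ e) := by
      set J1 : Ideal R :=
        { carrier := {a | ∃ M : ℕ, ∀ e, M ≤ e → a * x ^ p ^ e ∈ T * frobeniusPower I (p ^ e)}
          add_mem' := by
            rintro a b ⟨Ma, hMa⟩ ⟨Mb, hMb⟩
            refine ⟨max Ma Mb, fun e he => ?_⟩
            rw [add_mul]
            exact add_mem (hMa e (le_trans (le_max_left _ _) he))
              (hMb e (le_trans (le_max_right _ _) he))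
          zero_mem' := ⟨0, fun e _ => by rw [zero_mul]; exact zero_mem _⟩
          smul_mem' := by
            rintro r a ⟨Ma, hMa⟩
            refine ⟨Ma, fun e he => ?_⟩
            rw [smul_eq_mul, mul_assoc]
            exact Ideal.mul_mem_left _ r (hMa e he) } with hJ1def
      have hTJ1 : T ≤ J1 := by
        apply hTmin
        · refine ⟨d * c₀, ⟨N, fun e he => ?_⟩, hdreg.mul hc₀reg⟩
          rw [mul_assoc]
          exact Ideal.mul_mem_mul hdT (hc₀ e he)
        · intro e he φ hφ a ha
          obtain ⟨Ma, hMa⟩ := ha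
          refine ⟨Ma, fun e' he' => ?_⟩
          exact hstep e' e he φ hφ a (hMa (e' + e) (le_trans he' (Nat.le_add_right _ _)))
      obtain ⟨s, hsT⟩ := IsNoetherian.noetherian T
      have hmem : ∀ g : {g // g ∈ s}, (g : R) ∈ J1 := by
        intro g
        apply hTJ1
        rw [← hsT]
        exact Submodule.subset_span g.2
      choose Mf hMf using fun g => hmem g
      refine ⟨s.attach.sup Mf, ?_⟩
      intro t ht e he
      have htspan : t ∈ Submodule.span R (s : Set R) := by rw [hsT]; exact ht
      clear ht
      induction htspan using Submodule.span_induction with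
      | mem y hy =>
        exact hMf ⟨y, hy⟩ e
          (le_trans (Finset.le_sup (Finset.mem_attach s ⟨y, hy⟩)) he)
      | zero => rw [zero_mul]; exact zero_mem _
      | add y z _ _ hy hz => rw [add_mul]; exact add_mem hy hz
      | smul r y _ hy =>
        rw [smul_eq_mul, mul_assoc]
        exact Ideal.mul_mem_left _ r hy
    -- Step C : downward induction
    obtain ⟨M₀, hM₀⟩ := hJ1
    have main : ∀ j : ℕ, ∀ e : ℕ, M₀ ≤ e + j → ∀ t ∈ T,
        t * x ^ p ^ e ∈ T * frobeniusPower I (p ^ e) := by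
      intro j
      induction j with
      | zero => intro e he t ht; exact hM₀ t ht e (by simpa using he)
      | succ j ih =>
        intro e he t ht
        by_cases hcase : M₀ ≤ e + j
        · exact ih e hcase t ht
        · have htK : t ∈ K := hTK ht
          clear ht
          induction htK using Submodule.span_induction with
          | mem y hy =>
            obtain ⟨e₁, he₁, φ, hφ, u, hu, rfl⟩ := hy
            refine hstep e e₁ he₁ φ hφ u ?_
            refine ih (e + e₁) ?_ u hu
            omega
          | zero => rw [zero_mul]; exact zero_mem _
          | add y z _ _ hy hz => rw [add_mul]; exact add_mem hy hz
          | smul r y _ hy =>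
            rw [smul_eq_mul, mul_assoc]
            exact Ideal.mul_mem_left _ r hy
    intro t ht
    have h0 := main M₀ 0 (by omega) t ht
    rwa [pow_zero, pow_one, frobeniusPower_one] at h0
  -- conclude
  have easy : I ≤ tightClosure p I := by
    intro y hy
    refine Ideal.subset_span ⟨1, Rreg.one, 0, fun e _ => ?_⟩
    rw [one_mul]
    exact pow_mem_frobeniusPower hy _
  refine le_antisymm ?_ (Ideal.mul_mono_right easy)
  refine Ideal.mul_le.mpr ?_
  intro t ht y hy
  have hy' : y ∈ Ideal.span {z | InTightClosure p I z} := hy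
  clear hy
  induction hy' using Submodule.span_induction generalizing t with
  | mem z hz => exact core z hz t ht
  | zero => rw [mul_zero]; exact zero_mem _
  | add z w _ _ hz hw => rw [mul_add]; exact add_mem (hz t ht) (hw t ht)
  | smul r z _ hz =>
    rw [smul_eq_mul, show t * (r * z) = (t * r) * z by ring]
    exact hz (t * r) (Ideal.mul_mem_right r T ht)
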